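/- A quadratic algebra A over a field F of characteristic not 2 is left alternative if and only if it is right alternative, if and only if it is alternative. -/

import Mathlib

set_option linter.unusedSectionVars false

namespace QAalt

variable {F A : Type*} [Field F] [NonAssocRing A] [Nontrivial A]
    [Module F A] [SMulCommClass F A A] [IsScalarTower F A A]

lemma one_ne' : (1:A) ≠ 0 := by
  intro h
  have hz : ∀ z : A, z = 0 := fun z => by rw [← one_mul z, h, zero_mul]
  obtain ⟨x, y, hxy⟩ := exists_pair_ne A
  exact hxy ((hz x).trans (hz y).symm)

/-- `a` is a scalar multiple of `1`. -/
def span1 (F : Type*) {A : Type*} [Field F] [NonAssocRing A] [Module F A] (a : A) : Prop :=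
  ∃ c : F, a = c • (1:A)

variable (hq : ∀ a : A, ∃ r s : F, a * a = r • a + s • (1 : A))

/-- The trace of an element of a quadratic algebra. -/
noncomputable def tr (a : A) : F :=
  letI := Classical.propDecidable
  if h : span1 F a then 2 * h.choose else (hq a).choose

lemma smul_one_inj' {c d : F} (h : c • (1:A) = d • (1:A)) : c = d := by
  by_contra hne
  have h0 : (c - d) • (1:A) = 0 := by rw [sub_smul, h, sub_self]
  rcases smul_eq_zero.mp h0 with h1 | h1
  · exact hne (sub_eq_zero.mp h1)
  · exact one_ne' h1

lemma tr_smul_one (c : F) : tr hq (c • (1:A)) = 2 * c := by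
  unfold tr
  letI := Classical.propDecidable
  have h : span1 F (c • (1:A)) := ⟨c, rfl⟩
  rw [dif_pos h, smul_one_inj' h.choose_spec.symm]

lemma tr_spec (a : A) : ∃ s : F, a * a = tr hq a • a + s • (1:A) := by
  by_cases h : span1 F a
  · obtain ⟨c, rfl⟩ := h
    refine ⟨-(c * c), ?_⟩
    rw [tr_smul_one hq c, smul_mul_assoc, mul_smul_comm, mul_one]
    module
  · unfold tr
    letI := Classical.propDecidable
    rw [dif_neg h]
    exact (hq a).choose_spec

lemma tr_unique {a : A} (hns : ¬ span1 F a) {r s : F} (h : a*a = r•a + s•(1:A)) :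
    r = tr hq a := by
  obtain ⟨s', h'⟩ := tr_spec hq a
  by_contra hne
  apply hns
  have key : (r - tr hq a) • a = (s' - s) • (1:A) := by
    have e := h.symm.trans h'
    rw [sub_smul, sub_smul]
    linear_combination (norm := module) e
  refine ⟨(r - tr hq a)⁻¹ * (s' - s), ?_⟩
  rw [← smul_smul, ← key, smul_smul, inv_mul_cancel₀ (sub_ne_zero.mpr hne), one_smul]

lemma tr_one : tr hq (1:A) = 2 := by
  have := tr_smul_one hq (1:F); rwa [one_smul, mul_one] at this

lemma tr_zero : tr hq (0:A) = 0 := by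
  have := tr_smul_one hq (0:F); rwa [zero_smul, mul_zero] at this

lemma tr_affine {a : A} (hns : ¬ span1 F a) (c d : F) :
    tr hq (c • a + d • (1:A)) = c * tr hq a + 2 * d := by
  rcases eq_or_ne c 0 with rfl | hc
  · rw [zero_smul, zero_add, tr_smul_one, zero_mul, zero_add]
  obtain ⟨s, hs⟩ := tr_spec hq a
  have hb : ¬ span1 F (c • a + d • (1:A)) := by
    rintro ⟨e, he⟩
    have hca : c • a = (e - d) • (1:A) := by rw [sub_smul, ← he]; abel
    exact hns ⟨c⁻¹ * (e - d), by
      rw [← smul_smul, ← hca, smul_smul, inv_mul_cancel₀ hc, one_smul]⟩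
  refine (tr_unique hq hb (r := c * tr hq a + 2 * d)
    (s := c * c * s - c * d * tr hq a - d * d) ?_).symm
  have expand : (c • a + d • (1:A)) * (c • a + d • (1:A))
      = (c * c) • (a * a) + (2 * c * d) • a + (d * d) • (1:A) := by
    simp only [add_mul, mul_add, smul_mul_assoc, mul_smul_comm, smul_smul, mul_one, one_mul]
    module
  rw [expand, hs]
  module



lemma tr_smul (c : F) (a : A) : tr hq (c • a) = c * tr hq a := by
  by_cases h : span1 F a
  · obtain ⟨d, rfl⟩ := h
    rw [smul_smul, tr_smul_one, tr_smul_one]; ring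
  · have := tr_affine hq h c 0
    rw [zero_smul, add_zero, mul_zero, add_zero] at this
    exact this

lemma indep3 {a b : A} (ha : ¬ span1 F a) (hab : ¬ ∃ c d : F, b = c • a + d • (1:A))
    {x y z : F} (h : x • (1:A) + y • a + z • b = 0) : x = 0 ∧ y = 0 ∧ z = 0 := by
  have hz : z = 0 := by
    by_contra hz
    exact hab ⟨z⁻¹ * (-y), z⁻¹ * (-x), by
      have hb : z • b = (-y) • a + (-x) • (1:A) := by
        rw [neg_smul, neg_smul]; linear_combination (norm := module) h
      rw [← smul_smul, ← smul_smul, ← smul_add, ← hb, smul_smul,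
        inv_mul_cancel₀ hz, one_smul]⟩
  rw [hz, zero_smul, add_zero] at h
  have hy : y = 0 := by
    by_contra hy
    exact ha ⟨y⁻¹ * (-x), by
      have hb : y • a = (-x) • (1:A) := by
        rw [neg_smul]; linear_combination (norm := module) h
      rw [← smul_smul, ← hb, smul_smul, inv_mul_cancel₀ hy, one_smul]⟩
  rw [hy, zero_smul, add_zero] at h
  rcases smul_eq_zero.mp h with h1 | h1
  · exact ⟨h1, hy, hz⟩
  · exact absurd h1 one_ne'

lemma tr_add (h2 : (2:F) ≠ 0) (a b : A) : tr hq (a + b) = tr hq a + tr hq b := by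
  by_cases ha : span1 F a
  · obtain ⟨c, rfl⟩ := ha
    by_cases hb : span1 F b
    · obtain ⟨d, rfl⟩ := hb
      rw [← add_smul, tr_smul_one, tr_smul_one, tr_smul_one]; ring
    · have := tr_affine hq hb 1 c
      rw [one_smul, one_mul] at this
      rw [add_comm, this, tr_smul_one]; ring
  · by_cases hb : span1 F b
    · obtain ⟨d, rfl⟩ := hb
      have := tr_affine hq ha 1 d
      rw [one_smul, one_mul] at this
      rw [this, tr_smul_one]
    · by_cases hab : ∃ c d : F, b = c • a + d • (1:A)
      · obtain ⟨c, d, rfl⟩ := hab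
        have h1 : a + (c • a + d • (1:A)) = (1 + c) • a + d • (1:A) := by module
        rw [h1, tr_affine hq ha, tr_affine hq ha]; ring
      · -- fully independent case
        have hapb : ¬ span1 F (a + b) := by
          rintro ⟨e, he⟩
          exact hab ⟨-1, e, by linear_combination (norm := module) he⟩
        have hamb : ¬ span1 F (a - b) := by
          rintro ⟨e, he⟩
          exact hab ⟨1, -e, by linear_combination (norm := module) -he⟩
        obtain ⟨s1, hs1⟩ := tr_spec hq (a + b)
        obtain ⟨s2, hs2⟩ := tr_spec hq (a - b)
        obtain ⟨s3, hs3⟩ := tr_spec hq a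
        obtain ⟨s4, hs4⟩ := tr_spec hq b
        have hsum : (a + b) * (a + b) + (a - b) * (a - b) = (2:F) • (a * a) + (2:F) • (b * b) := by
          simp only [add_mul, mul_add, sub_mul, mul_sub]
          module
        rw [hs1, hs2, hs3, hs4] at hsum
        have key : (s1 + s2 - 2 * s3 - 2 * s4) • (1:A)
            + (tr hq (a+b) + tr hq (a-b) - 2 * tr hq a) • a
            + (tr hq (a+b) - tr hq (a-b) - 2 * tr hq b) • b = 0 := by
          linear_combination (norm := module) hsum
        obtain ⟨-, h5, h6⟩ := indep3 ha hab key
        have : 2 * tr hq (a + b) = 2 * (tr hq a + tr hq b) := by linear_combination h5 + h6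
        exact mul_left_cancel₀ h2 this

lemma tr_neg (a : A) : tr hq (-a) = - tr hq a := by
  have := tr_smul hq (-1) a
  rw [neg_one_smul, neg_one_mul] at this
  exact this

lemma tr_sub (h2 : (2:F) ≠ 0) (a b : A) : tr hq (a - b) = tr hq a - tr hq b := by
  rw [sub_eq_add_neg, tr_add hq h2, tr_neg, sub_eq_add_neg]

/-- Scalar part of a product. -/
noncomputable def mu (a b : A) : F := tr hq (a * b) / 2

/-- Trace-free part of a product. -/
noncomputable def sg (a b : A) : A := a * b - mu hq a b • (1:A)

lemma mul_eq_mu_sg (a b : A) : a * b = mu hq a b • (1:A) + sg hq a b := by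
  unfold sg; abel

lemma tr_sg (h2 : (2:F) ≠ 0) (a b : A) : tr hq (sg hq a b) = 0 := by
  unfold sg mu
  rw [tr_sub hq h2, tr_smul, tr_one]
  field_simp
  ring

lemma split0 (h2 : (2:F) ≠ 0) {c : F} {x : A} (hx : tr hq x = 0)
    (h : c • (1:A) + x = 0) : c = 0 ∧ x = 0 := by
  have h1 : tr hq (c • (1:A) + x) = tr hq (0:A) := by rw [h]
  rw [tr_add hq h2, tr_smul, tr_one, tr_zero, hx, add_zero] at h1
  have hc : c = 0 := by
    rcases mul_eq_zero.mp h1 with h1 | h1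
    · exact h1
    · exact absurd h1 h2
  refine ⟨hc, ?_⟩
  rw [hc, zero_smul, zero_add] at h
  exact h

-- bilinearity of mu and sg
lemma mu_add_left (h2 : (2:F) ≠ 0) (a b c : A) :
    mu hq (a + b) c = mu hq a c + mu hq b c := by
  unfold mu; rw [add_mul, tr_add hq h2]; ring

lemma mu_add_right (h2 : (2:F) ≠ 0) (a b c : A) :
    mu hq a (b + c) = mu hq a b + mu hq a c := by
  unfold mu; rw [mul_add, tr_add hq h2]; ring

lemma mu_smul_left (c : F) (a b : A) : mu hq (c • a) b = c * mu hq a b := by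
  unfold mu; rw [smul_mul_assoc, tr_smul]; ring

lemma mu_smul_right (c : F) (a b : A) : mu hq a (c • b) = c * mu hq a b := by
  unfold mu; rw [mul_smul_comm, tr_smul]; ring

lemma mu_zero_left (a : A) : mu hq 0 a = 0 := by
  unfold mu; rw [zero_mul, tr_zero]; ring

lemma mu_zero_right (a : A) : mu hq a 0 = 0 := by
  unfold mu; rw [mul_zero, tr_zero]; ring

lemma sg_add_left (h2 : (2:F) ≠ 0) (a b c : A) :
    sg hq (a + b) c = sg hq a c + sg hq b c := by
  unfold sg; rw [add_mul, mu_add_left hq h2, add_smul]; abel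

lemma sg_add_right (h2 : (2:F) ≠ 0) (a b c : A) :
    sg hq a (b + c) = sg hq a b + sg hq a c := by
  unfold sg; rw [mul_add, mu_add_right hq h2, add_smul]; abel

lemma sg_smul_left (c : F) (a b : A) : sg hq (c • a) b = c • sg hq a b := by
  unfold sg; rw [smul_mul_assoc, mu_smul_left, smul_sub, smul_smul]

lemma sg_smul_right (c : F) (a b : A) : sg hq a (c • b) = c • sg hq a b := by
  unfold sg; rw [mul_smul_comm, mu_smul_right, smul_sub, smul_smul]

lemma sg_zero_left (a : A) : sg hq 0 a = 0 := by
  unfold sg; rw [zero_mul, mu_zero_left, zero_smul, sub_zero]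

-- trace-zero elements
lemma sq_of_tr_zero (h2 : (2:F) ≠ 0) {v : A} (hv : tr hq v = 0) :
    v * v = mu hq v v • (1:A) := by
  obtain ⟨s, hs⟩ := tr_spec hq v
  rw [hv, zero_smul, zero_add] at hs
  have : mu hq v v = s := by
    unfold mu
    rw [hs, tr_smul, tr_one]
    field_simp
  rw [this, hs]

lemma sg_self (h2 : (2:F) ≠ 0) {v : A} (hv : tr hq v = 0) : sg hq v v = 0 := by
  unfold sg
  rw [sq_of_tr_zero hq h2 hv, sub_self]

lemma sg_antisymm (h2 : (2:F) ≠ 0) {v w : A} (hv : tr hq v = 0) (hw : tr hq w = 0) :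
    sg hq w v = - sg hq v w := by
  have hvw : tr hq (v + w) = 0 := by rw [tr_add hq h2, hv, hw, add_zero]
  have e : (v + w) * (v + w) = v * v + (v * w + w * v) + w * w := by
    simp only [add_mul, mul_add]; abel
  rw [sq_of_tr_zero hq h2 hvw, sq_of_tr_zero hq h2 hv, sq_of_tr_zero hq h2 hw] at e
  -- v*w + w*v is a multiple of 1
  have e2 : v * w + w * v = (mu hq (v+w) (v+w) - mu hq v v - mu hq w w) • (1:A) := by
    rw [sub_smul, sub_smul]
    linear_combination (norm := module) -e
  have e3 : (mu hq v w + mu hq w v - (mu hq (v+w) (v+w) - mu hq v v - mu hq w w)) • (1:A)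
      + (sg hq v w + sg hq w v) = 0 := by
    have d1 := mul_eq_mu_sg hq v w
    have d2 := mul_eq_mu_sg hq w v
    rw [d1, d2] at e2
    linear_combination (norm := module) e2
  have h4 := (split0 hq h2 (by rw [tr_add hq h2, tr_sg hq h2, tr_sg hq h2, add_zero]) e3).2
  linear_combination (norm := abel) h4

lemma mu_sub_right (h2 : (2:F) ≠ 0) (a b c : A) :
    mu hq a (b - c) = mu hq a b - mu hq a c := by
  have := mu_add_right hq h2 a c (b - c)
  rw [add_sub_cancel] at this
  linear_combination -this

lemma mu_sub_left (h2 : (2:F) ≠ 0) (a b c : A) :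
    mu hq (a - b) c = mu hq a c - mu hq b c := by
  have := mu_add_left hq h2 b (a - b) c
  rw [add_sub_cancel] at this
  linear_combination -this

lemma sg_sub_right (h2 : (2:F) ≠ 0) (a b c : A) :
    sg hq a (b - c) = sg hq a b - sg hq a c := by
  have := sg_add_right hq h2 a c (b - c)
  rw [add_sub_cancel] at this
  rw [this]; abel

lemma sg_zero_right (a : A) : sg hq a 0 = 0 := by
  unfold sg; rw [mul_zero, mu_zero_right, zero_smul, sub_zero]

section LA
variable (h2 : (2:F) ≠ 0) (hL : ∀ a b : A, a * (a * b) = (a * a) * b)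
include hq h2 hL

lemma M_split {v w : A} (hv : tr hq v = 0) (hw : tr hq w = 0) :
    mu hq v (sg hq v w) = 0 ∧
      sg hq v (sg hq v w) = mu hq v v • w - mu hq v w • v := by
  have la := hL v w
  have e1 : v * (v * w) = mu hq v (sg hq v w) • (1:A)
      + (mu hq v w • v + sg hq v (sg hq v w)) := by
    conv_lhs => rw [mul_eq_mu_sg hq v w]
    rw [mul_add, mul_smul_comm, mul_one]
    conv_lhs => rw [mul_eq_mu_sg hq v (sg hq v w)]
    abel
  have e2 : (v * v) * w = mu hq v v • w := by
    rw [sq_of_tr_zero hq h2 hv, smul_mul_assoc, one_mul]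
  rw [e1, e2] at la
  have e0 : mu hq v (sg hq v w) • (1:A)
      + (sg hq v (sg hq v w) - (mu hq v v • w - mu hq v w • v)) = 0 := by
    linear_combination (norm := module) la
  have htz : tr hq (sg hq v (sg hq v w) - (mu hq v v • w - mu hq v w • v)) = 0 := by
    rw [tr_sub hq h2, tr_sub hq h2, tr_sg hq h2, tr_smul, tr_smul, hv, hw]
    ring
  obtain ⟨hA, hB⟩ := split0 hq h2 htz e0
  exact ⟨hA, sub_eq_zero.mp hB⟩

lemma M1 {v w : A} (hv : tr hq v = 0) (hw : tr hq w = 0) :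
    mu hq v (sg hq v w) = 0 := (M_split hq h2 hL hv hw).1

lemma M2 {v w : A} (hv : tr hq v = 0) (hw : tr hq w = 0) :
    sg hq v (sg hq v w) = mu hq v v • w - mu hq v w • v := (M_split hq h2 hL hv hw).2

lemma M2L {u v w : A} (hu : tr hq u = 0) (hv : tr hq v = 0) (hw : tr hq w = 0) :
    sg hq v (sg hq u w) + sg hq u (sg hq v w)
      = (mu hq u v + mu hq v u) • w - mu hq v w • u - mu hq u w • v := by
  have hvu : tr hq (v + u) = 0 := by rw [tr_add hq h2, hv, hu, add_zero]
  have m := M2 hq h2 hL hvu hw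
  simp only [sg_add_left hq h2, sg_add_right hq h2, mu_add_left hq h2,
    mu_add_right hq h2] at m
  have mv := M2 hq h2 hL hv hw
  have mu' := M2 hq h2 hL hu hw
  linear_combination (norm := module) m - mv - mu'

lemma M1L {u v w : A} (hu : tr hq u = 0) (hv : tr hq v = 0) (hw : tr hq w = 0) :
    mu hq u (sg hq v w) + mu hq v (sg hq u w) = 0 := by
  have hvu : tr hq (v + u) = 0 := by rw [tr_add hq h2, hv, hu, add_zero]
  have m := M1 hq h2 hL hvu hw
  simp only [sg_add_left hq h2, sg_add_right hq h2, mu_add_left hq h2,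
    mu_add_right hq h2] at m
  have mv := M1 hq h2 hL hv hw
  have mu' := M1 hq h2 hL hu hw
  linear_combination m - mv - mu'

lemma mu_w_sg {v w : A} (hv : tr hq v = 0) (hw : tr hq w = 0) :
    mu hq w (sg hq v w) = 0 := by
  have := M1L hq h2 hL hw hv hw
  rw [sg_self hq h2 hw, mu_zero_right] at this
  linear_combination this

lemma sg_zw {v w : A} (hv : tr hq v = 0) (hw : tr hq w = 0) :
    sg hq (sg hq v w) w = mu hq w w • v - mu hq w v • w := by
  have hz : tr hq (sg hq v w) = 0 := tr_sg hq h2 v w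
  have h3 : sg hq w (sg hq v w) = - sg hq w (sg hq w v) := by
    rw [sg_antisymm hq h2 hv hw,
      show -sg hq v w = (-1:F) • sg hq v w by module, sg_smul_right]
    module
  have h1 := sg_antisymm hq h2 hz hw
  rw [h1, neg_inj] at h3
  rw [h3, M2 hq h2 hL hw hv]

lemma E3 {v w : A} (hv : tr hq v = 0) (hw : tr hq w = 0) :
    (mu hq v w - mu hq w v) • sg hq v w
      + mu hq (sg hq v w) w • v - mu hq (sg hq v w) v • w = 0 := by
  have hz : tr hq (sg hq v w) = 0 := tr_sg hq h2 v w
  have m := M2L hq h2 hL hz hv hw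
  rw [sg_self hq h2 hz] at m
  have h4 : sg hq v (sg hq (sg hq v w) w)
      = mu hq w w • sg hq v v - mu hq w v • sg hq v w := by
    rw [sg_zw hq h2 hL hv hw, sg_sub_right hq h2, sg_smul_right, sg_smul_right]
  rw [h4, sg_self hq h2 hv, smul_zero, M1 hq h2 hL hv hw] at m
  linear_combination (norm := module) m

lemma lam_smul {v w : A} (hv : tr hq v = 0) (hw : tr hq w = 0) :
    (mu hq v w - mu hq w v) • v = 0 := by
  by_contra hne
  have hlam : mu hq v w - mu hq w v ≠ 0 := fun h => hne (by rw [h, zero_smul])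
  have hv0 : v ≠ 0 := fun h => hne (by rw [h, smul_zero])
  have hz : tr hq (sg hq v w) = 0 := tr_sg hq h2 v w
  have e3 := E3 hq h2 hL hv hw
  have hMvz : mu hq v (sg hq v w) = 0 := M1 hq h2 hL hv hw
  -- C1 : apply mu v ·
  have C1 : (mu hq v w - mu hq w v) * mu hq v (sg hq v w)
      + mu hq (sg hq v w) w * mu hq v v - mu hq (sg hq v w) v * mu hq v w = 0 := by
    have h5 := congrArg (fun y => mu hq v y) e3
    simpa [mu_add_right hq h2, mu_sub_right hq h2, mu_smul_right, mu_zero_right,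
      mul_comm] using h5
  rw [hMvz, mul_zero] at C1
  -- C3 : apply mu · v
  have C3 : (mu hq v w - mu hq w v) * mu hq (sg hq v w) v
      + mu hq (sg hq v w) w * mu hq v v - mu hq (sg hq v w) v * mu hq w v = 0 := by
    have h5 := congrArg (fun y => mu hq y v) e3
    simpa [mu_add_left hq h2, mu_sub_left hq h2, mu_smul_left, mu_zero_left,
      mul_comm] using h5
  -- C4 : lam * p = 0 hence p = 0
  have C4 : (2:F) * ((mu hq v w - mu hq w v) * mu hq (sg hq v w) v) = 0 := by
    linear_combination C3 - C1
  have hp : mu hq (sg hq v w) v = 0 := by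
    rcases mul_eq_zero.mp C4 with h | h
    · exact absurd h h2
    · rcases mul_eq_zero.mp h with h | h
      · exact absurd h hlam
      · exact h
  rw [hp, zero_smul, sub_zero] at e3
  -- E4 : apply sg v ·
  have E4 : (mu hq v w - mu hq w v) • sg hq v (sg hq v w)
      + mu hq (sg hq v w) w • sg hq v v = 0 := by
    have h5 := congrArg (fun y => sg hq v y) e3
    simpa [sg_add_right hq h2, sg_smul_right, sg_zero_right] using h5
  rw [M2 hq h2 hL hv hw, sg_self hq h2 hv, smul_zero, add_zero] at E4
  have E6 : mu hq v v • w - mu hq v w • v = 0 := by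
    rcases smul_eq_zero.mp E4 with h | h
    · exact absurd h hlam
    · exact h
  -- z = k • v
  have h5 : (mu hq v w - mu hq w v) • sg hq v w = (- mu hq (sg hq v w) w) • v := by
    linear_combination (norm := module) e3
  have hzv : sg hq v w = ((mu hq v w - mu hq w v)⁻¹ * (- mu hq (sg hq v w) w)) • v := by
    rw [← smul_smul, ← h5, smul_smul, inv_mul_cancel₀ hlam, one_smul]
  by_cases hcq : mu hq (sg hq v w) w = 0
  · -- q = 0 : z = 0
    have hz0 : sg hq v w = 0 := by rw [hzv, hcq, neg_zero, mul_zero, zero_smul]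
    by_cases hwv : ∃ c : F, w = c • v
    · obtain ⟨c, rfl⟩ := hwv
      rw [mu_smul_right, mu_smul_left, sub_self] at hlam
      exact hlam rfl
    · have hmvv : mu hq v v = 0 := by
        by_contra hmv
        refine hwv ⟨(mu hq v v)⁻¹ * mu hq v w, ?_⟩
        have h6 : mu hq v v • w = mu hq v w • v := by
          linear_combination (norm := module) E6
        rw [← smul_smul, ← h6, smul_smul, inv_mul_cancel₀ hmv, one_smul]
      have hmvw : mu hq v w = 0 := by
        rw [hmvv, zero_smul, zero_sub, neg_eq_zero] at E6
        rcases smul_eq_zero.mp E6 with h | h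
        · exact h
        · exact absurd h hv0
      have hsgwv : sg hq w v = 0 := by
        rw [sg_antisymm hq h2 hv hw, hz0, neg_zero]
      have m2wv := M2 hq h2 hL hw hv
      rw [hsgwv, sg_zero_right] at m2wv
      have hvw' : ¬ ∃ c : F, v = c • w := by
        rintro ⟨c, hc⟩
        rcases eq_or_ne c 0 with rfl | hc0
        · rw [zero_smul] at hc; exact hv0 hc
        · exact hwv ⟨c⁻¹, by rw [hc, smul_smul, inv_mul_cancel₀ hc0, one_smul]⟩
      have hmww : mu hq w w = 0 := by
        by_contra hmw
        refine hvw' ⟨(mu hq w w)⁻¹ * mu hq w v, ?_⟩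
        have h6 : mu hq w w • v = mu hq w v • w := by
          linear_combination (norm := module) -m2wv
        rw [← smul_smul, ← h6, smul_smul, inv_mul_cancel₀ hmw, one_smul]
      have hmwv : mu hq w v = 0 := by
        rw [hmww, zero_smul] at m2wv
        have h7 : mu hq w v • w = 0 := by linear_combination (norm := module) m2wv
        rcases smul_eq_zero.mp h7 with h | h
        · exact h
        · exact absurd (hwv ⟨0, by rw [h, zero_smul]⟩) (fun x => x)
      rw [hmvw, hmwv, sub_zero] at hlam
      exact hlam rfl
  · -- q ≠ 0
    have hk : (mu hq v w - mu hq w v)⁻¹ * (- mu hq (sg hq v w) w) ≠ 0 :=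
      mul_ne_zero (inv_ne_zero hlam) (neg_ne_zero.mpr hcq)
    have hp2 : ((mu hq v w - mu hq w v)⁻¹ * (- mu hq (sg hq v w) w)) * mu hq v v = 0 := by
      rw [← mu_smul_left hq ((mu hq v w - mu hq w v)⁻¹ * (- mu hq (sg hq v w) w)) v v,
        ← hzv]
      exact hp
    have hmvv : mu hq v v = 0 := by
      rcases mul_eq_zero.mp hp2 with h | h
      · exact absurd h hk
      · exact h
    have hmvw : mu hq v w = 0 := by
      rw [hmvv, zero_smul, zero_sub, neg_eq_zero] at E6
      rcases smul_eq_zero.mp E6 with h | h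
      · exact h
      · exact absurd h hv0
    have hq2 : mu hq (sg hq v w) w
        = ((mu hq v w - mu hq w v)⁻¹ * (- mu hq (sg hq v w) w)) * mu hq v w := by
      conv_lhs => rw [hzv]
      rw [mu_smul_left]
    rw [hmvw, mul_zero] at hq2
    exact hcq hq2

lemma pzero {v w : A} (hv : tr hq v = 0) (hw : tr hq w = 0) :
    mu hq (sg hq v w) v = 0 := by
  rcases eq_or_ne v 0 with rfl | hv0
  · rw [sg_zero_left, mu_zero_left]
  have hz : tr hq (sg hq v w) = 0 := tr_sg hq h2 v w
  have h1 := lam_smul hq h2 hL hv hz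
  rw [M1 hq h2 hL hv hw, zero_sub, neg_smul, neg_eq_zero] at h1
  rcases smul_eq_zero.mp h1 with h | h
  · exact h
  · exact absurd h hv0

lemma qzero {v w : A} (hv : tr hq v = 0) (hw : tr hq w = 0) :
    mu hq (sg hq v w) w = 0 := by
  rw [sg_antisymm hq h2 hw hv, show -sg hq w v = (-1:F) • sg hq w v by module,
    mu_smul_left, pzero hq h2 hL hw hv, mul_zero]

lemma RA0 {v w : A} (hv : tr hq v = 0) (hw : tr hq w = 0) :
    (v * w) * w = v * (w * w) := by
  have hrhs : v * (w * w) = mu hq w w • v := by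
    rw [sq_of_tr_zero hq h2 hw, mul_smul_comm, mul_one]
  have hlam : (mu hq w v - mu hq v w) • w = 0 := lam_smul hq h2 hL hw hv
  have hlhs : (v * w) * w = mu hq v w • w + sg hq (sg hq v w) w := by
    conv_lhs => rw [mul_eq_mu_sg hq v w]
    rw [add_mul, smul_mul_assoc, one_mul]
    conv_lhs => rw [mul_eq_mu_sg hq (sg hq v w) w]
    rw [qzero hq h2 hL hv hw, zero_smul, zero_add]
  rw [hlhs, hrhs, sg_zw hq h2 hL hv hw]
  linear_combination (norm := module) -hlam

/-- Left alternativity implies right alternativity. -/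
lemma la_imp_ra (a b : A) : (a * b) * b = a * (b * b) := by
  have hv : tr hq (a - (tr hq a / 2) • (1:A)) = 0 := by
    rw [tr_sub hq h2, tr_smul, tr_one]
    field_simp
    ring
  have hw : tr hq (b - (tr hq b / 2) • (1:A)) = 0 := by
    rw [tr_sub hq h2, tr_smul, tr_one]
    field_simp
    ring
  have h0 := RA0 hq h2 hL hv hw
  have ha : a = (a - (tr hq a / 2) • (1:A)) + (tr hq a / 2) • (1:A) := by abel
  have hb : b = (b - (tr hq b / 2) • (1:A)) + (tr hq b / 2) • (1:A) := by abel
  rw [ha, hb]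
  simp only [add_mul, mul_add, smul_mul_assoc, mul_smul_comm, mul_one, one_mul, smul_smul]
  linear_combination (norm := module) h0

end LA
end QAalt

/-- A quadratic algebra over a field of characteristic not `2` is left
alternative iff it is right alternative, iff it is alternative. -/
theorem quadratic_leftAlt_iff_rightAlt_iff_alt
    {F A : Type*} [Field F] [NonAssocRing A] [Nontrivial A]
    [Module F A] [SMulCommClass F A A] [IsScalarTower F A A]
    (h2 : (2 : F) ≠ 0)
    (hquad : ∀ a : A, ∃ r s : F, a * a = r • a + s • (1 : A)) :
    ((∀ a b : A, a * (a * b) = (a * a) * b) ↔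
      (∀ a b : A, (a * b) * b = a * (b * b))) ∧
    ((∀ a b : A, a * (a * b) = (a * a) * b) ↔
      ((∀ a b : A, a * (a * b) = (a * a) * b) ∧
       (∀ a b : A, (a * b) * b = a * (b * b)))) := by
  have hquad_op : ∀ a : Aᵐᵒᵖ, ∃ r s : F, a * a = r • a + s • (1 : Aᵐᵒᵖ) := by
    intro a
    obtain ⟨r, s, h⟩ := hquad a.unop
    exact ⟨r, s, MulOpposite.unop_injective (by simpa using h)⟩
  have dir1 : (∀ a b : A, a * (a * b) = (a * a) * b) →
      ∀ a b : A, (a * b) * b = a * (b * b) :=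
    fun hL a b => QAalt.la_imp_ra hquad h2 hL a b
  have dir2 : (∀ a b : A, (a * b) * b = a * (b * b)) →
      ∀ a b : A, a * (a * b) = (a * a) * b := by
    intro hR a b
    have hLop : ∀ x y : Aᵐᵒᵖ, x * (x * y) = (x * x) * y := by
      intro x y
      apply MulOpposite.unop_injective
      simpa using hR y.unop x.unop
    have := QAalt.la_imp_ra hquad_op h2 hLop (MulOpposite.op b) (MulOpposite.op a)
    have h3 := congrArg MulOpposite.unop this
    simpa using h3
  exact ⟨⟨dir1, dir2⟩, ⟨fun hL => ⟨hL, dir1 hL⟩, fun h => h.1⟩⟩
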